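/- Let E and F be finite-dimensional ℚ_p-vector spaces with ultrametric norms. Let f : B_E(1) → F be a function, df : B_E(1) → 𝓛(E,F) a map to continuous linear maps, and C > 0 a constant such that for all x, y ∈ B_E(1): ‖f(y) − f(x) − df_x(y−x)‖_F ≤ C·‖y−x‖_E² and ‖df_y − df_x‖_{𝓛(E,F)} ≤ C·‖y−x‖_E. Let v ∈ B_E(1) be such that df_v is invertible and ‖f(v)‖_F · ‖df_v^{−1}‖_{𝓛(F,E)}² < C^{−1} ≤ ‖df_v^{−1}‖_{𝓛(F,E)}. Set r = (C·‖df_v^{−1}‖_{𝓛(F,E)})^{−1} and let V = {x ∈ E : ‖x − v‖_E < r}. Then for every x ∈ V: (1) df_x is invertible and ‖df_x^{−1}‖_{𝓛(F,E)} = ‖df_v^{−1}‖_{𝓛(F,E)}; (2) the Newton iterate 𝓝(x) = x − df_x^{−1}(f(x)) lies in V; and (3) ‖f(𝓝(x))‖_F ≤ C·‖df_v^{−1}‖_{𝓛(F,E)}²·‖f(x)‖_F². -/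
import Mathlib

open ContinuousLinearMap

private theorem aux_le {𝕜 E F : Type*} [NontriviallyNormedField 𝕜]
    [NormedAddCommGroup E] [NormedSpace 𝕜 E]
    [NormedAddCommGroup F] [NormedSpace 𝕜 F]
    (hEult : ∀ x y : E, ‖x + y‖ ≤ max ‖x‖ ‖y‖)
    (A A₀ : E →L[𝕜] F) (B B₀ : F →L[𝕜] E)
    (hB₀ : B₀.comp A₀ = ContinuousLinearMap.id 𝕜 E)
    (hAB : A.comp B = ContinuousLinearMap.id 𝕜 F)
    (h : ‖B₀‖ * ‖A - A₀‖ < 1) : ‖B‖ ≤ ‖B₀‖ := by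
  refine ContinuousLinearMap.opNorm_le_bound _ (norm_nonneg B₀) fun y => ?_
  set z := B y with hz
  have hAz : A z = y := by
    have := ContinuousLinearMap.ext_iff.1 hAB y
    simpa using this
  have h1 : B₀ (A₀ z) = z := by
    have := ContinuousLinearMap.ext_iff.1 hB₀ z
    simpa using this
  have hkey : z = B₀ y - B₀ ((A - A₀) z) := by
    have h2 : B₀ ((A - A₀) z) = B₀ y - z := by
      rw [ContinuousLinearMap.sub_apply, map_sub, hAz, h1]
    rw [h2]; abel
  have hmax : ‖z‖ ≤ max ‖B₀ y‖ ‖B₀ ((A - A₀) z)‖ := by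
    calc ‖z‖ = ‖B₀ y + -(B₀ ((A - A₀) z))‖ := by rw [← sub_eq_add_neg, ← hkey]
      _ ≤ max ‖B₀ y‖ ‖-(B₀ ((A - A₀) z))‖ := hEult _ _
      _ = max ‖B₀ y‖ ‖B₀ ((A - A₀) z)‖ := by rw [norm_neg]
  have hb1 : ‖B₀ y‖ ≤ ‖B₀‖ * ‖y‖ := B₀.le_opNorm y
  have hb2 : ‖B₀ ((A - A₀) z)‖ ≤ ‖B₀‖ * (‖A - A₀‖ * ‖z‖) := by
    calc ‖B₀ ((A - A₀) z)‖ ≤ ‖B₀‖ * ‖(A - A₀) z‖ := B₀.le_opNorm _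
      _ ≤ ‖B₀‖ * (‖A - A₀‖ * ‖z‖) :=
        mul_le_mul_of_nonneg_left ((A - A₀).le_opNorm z) (norm_nonneg B₀)
  rcases le_max_iff.1 hmax with hc | hc
  · exact hc.trans hb1
  · have := hc.trans hb2
    nlinarith [norm_nonneg z, norm_nonneg y, norm_nonneg B₀, mul_nonneg (norm_nonneg B₀) (norm_nonneg y)]

private theorem aux_inv {𝕜 E F : Type*} [NontriviallyNormedField 𝕜]
    [NormedAddCommGroup E] [NormedSpace 𝕜 E] [CompleteSpace E]
    [NormedAddCommGroup F] [NormedSpace 𝕜 F] [CompleteSpace F]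
    (A A₀ : E →L[𝕜] F) (T₀ : F →L[𝕜] E)
    (hl : T₀.comp A₀ = 1)
    (hr : A₀.comp T₀ = 1)
    (h : ‖T₀‖ * ‖A - A₀‖ < 1) :
    ∃ T : F →L[𝕜] E, T.comp A = ContinuousLinearMap.id 𝕜 E ∧
      A.comp T = ContinuousLinearMap.id 𝕜 F := by
  set Δ := A - A₀ with hΔdef
  have ht : ‖-(T₀.comp Δ)‖ < 1 := by
    rw [norm_neg]; exact lt_of_le_of_lt (ContinuousLinearMap.opNorm_comp_le _ _) h
  have ht' : ‖-(Δ.comp T₀)‖ < 1 := by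
    rw [norm_neg]
    calc ‖Δ.comp T₀‖ ≤ ‖Δ‖ * ‖T₀‖ := ContinuousLinearMap.opNorm_comp_le _ _
      _ = ‖T₀‖ * ‖Δ‖ := mul_comm _ _
      _ < 1 := h
  let u : (E →L[𝕜] E)ˣ := Units.oneSub _ ht
  let u' : (F →L[𝕜] F)ˣ := Units.oneSub _ ht'
  have hu : (u : E →L[𝕜] E) = T₀.comp A := by
    show 1 - -(T₀.comp Δ) = T₀.comp A
    rw [sub_neg_eq_add, hΔdef, ContinuousLinearMap.comp_sub, hl]
    abel
  have hu' : (u' : F →L[𝕜] F) = A.comp T₀ := by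
    show 1 - -(Δ.comp T₀) = A.comp T₀
    rw [sub_neg_eq_add, hΔdef, ContinuousLinearMap.sub_comp, hr]
    abel
  refine ⟨(↑u⁻¹ : E →L[𝕜] E).comp T₀, ?_, ?_⟩
  · rw [ContinuousLinearMap.comp_assoc, ← hu, ← ContinuousLinearMap.mul_def, u.inv_mul]
    rfl
  · have hT'r : A.comp (T₀.comp (↑u'⁻¹ : F →L[𝕜] F)) = ContinuousLinearMap.id 𝕜 F := by
      rw [← ContinuousLinearMap.comp_assoc, ← hu', ← ContinuousLinearMap.mul_def, u'.mul_inv]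
      rfl
    have hTT' : (↑u⁻¹ : E →L[𝕜] E).comp T₀ = T₀.comp (↑u'⁻¹ : F →L[𝕜] F) := by
      have h1 : ((↑u⁻¹ : E →L[𝕜] E).comp T₀).comp (A.comp (T₀.comp (↑u'⁻¹ : F →L[𝕜] F)))
          = (↑u⁻¹ : E →L[𝕜] E).comp T₀ := by
        rw [hT'r]; exact ContinuousLinearMap.comp_id _
      have h2 : ((↑u⁻¹ : E →L[𝕜] E).comp T₀).comp (A.comp (T₀.comp (↑u'⁻¹ : F →L[𝕜] F)))
          = T₀.comp (↑u'⁻¹ : F →L[𝕜] F) := by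
        rw [← ContinuousLinearMap.comp_assoc, ContinuousLinearMap.comp_assoc (↑u⁻¹ : E →L[𝕜] E),
          ← hu, ← ContinuousLinearMap.mul_def, u.inv_mul]
        exact ContinuousLinearMap.id_comp _
      rw [← h1, h2]
    rw [hTT']
    exact hT'r


set_option maxHeartbeats 1000000 in
theorem stmt16 {p : ℕ} [Fact p.Prime]
    {E F : Type*} [NormedAddCommGroup E] [NormedSpace ℚ_[p] E] [FiniteDimensional ℚ_[p] E]
    [NormedAddCommGroup F] [NormedSpace ℚ_[p] F] [FiniteDimensional ℚ_[p] F]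
    (hEult : ∀ x y : E, ‖x + y‖ ≤ max ‖x‖ ‖y‖)
    (hFult : ∀ x y : F, ‖x + y‖ ≤ max ‖x‖ ‖y‖)
    (hEhom : ∀ (c : ℚ_[p]) (x : E), ‖c • x‖ = ‖c‖ * ‖x‖)
    (hFhom : ∀ (c : ℚ_[p]) (x : F), ‖c • x‖ = ‖c‖ * ‖x‖)
    (f : E → F) (df : E → (E →L[ℚ_[p]] F)) (C : ℝ) (hC : 0 < C)
    (hf1 : ∀ x y : E, ‖x‖ ≤ 1 → ‖y‖ ≤ 1 → ‖f y - f x - df x (y - x)‖ ≤ C * ‖y - x‖ ^ 2)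
    (hf2 : ∀ x y : E, ‖x‖ ≤ 1 → ‖y‖ ≤ 1 → ‖df y - df x‖ ≤ C * ‖y - x‖)
    (v : E) (hv : ‖v‖ ≤ 1)
    (T₀ : F →L[ℚ_[p]] E)
    (hT₀l : T₀.comp (df v) = ContinuousLinearMap.id ℚ_[p] E)
    (hT₀r : (df v).comp T₀ = ContinuousLinearMap.id ℚ_[p] F)
    (hmain : ‖f v‖ * ‖T₀‖ ^ 2 < C⁻¹) (hmain' : C⁻¹ ≤ ‖T₀‖) :
    ∀ x : E, ‖x - v‖ < (C * ‖T₀‖)⁻¹ →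
      (∃ T : F →L[ℚ_[p]] E, T.comp (df x) = ContinuousLinearMap.id ℚ_[p] E ∧
        (df x).comp T = ContinuousLinearMap.id ℚ_[p] F ∧ ‖T‖ = ‖T₀‖) ∧
      (∀ T : F →L[ℚ_[p]] E,
        T.comp (df x) = ContinuousLinearMap.id ℚ_[p] E →
        (df x).comp T = ContinuousLinearMap.id ℚ_[p] F →
        ‖x - T (f x) - v‖ < (C * ‖T₀‖)⁻¹ ∧
        ‖f (x - T (f x))‖ ≤ C * ‖T₀‖ ^ 2 * ‖f x‖ ^ 2) := by
  intro x hx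
  haveI : CompleteSpace E := FiniteDimensional.complete ℚ_[p] E
  haveI : CompleteSpace F := FiniteDimensional.complete ℚ_[p] F
  have hC' : (0:ℝ) < C⁻¹ := inv_pos.2 hC
  have hK0 : (0:ℝ) < ‖T₀‖ := lt_of_lt_of_le hC' hmain'
  have hCK : (0:ℝ) < C * ‖T₀‖ := mul_pos hC hK0
  have hCC : C * C⁻¹ = 1 := mul_inv_cancel₀ hC.ne'
  have hCK1 : 1 ≤ C * ‖T₀‖ := by nlinarith
  have hr1 : (C * ‖T₀‖)⁻¹ ≤ 1 := by
    rw [inv_eq_one_div, div_le_one hCK]; exact hCK1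
  have hlt_r : ∀ a : ℝ, a * (C * ‖T₀‖) < 1 → a < (C * ‖T₀‖)⁻¹ := fun a ha => by
    rw [inv_eq_one_div, lt_div_iff₀ hCK]; exact ha
  have hxCK : ‖x - v‖ * (C * ‖T₀‖) < 1 := by
    have := mul_lt_mul_of_pos_right hx hCK
    rwa [inv_mul_cancel₀ hCK.ne'] at this
  have ultra_sub : ∀ a b : E, ‖a - b‖ ≤ max ‖a‖ ‖b‖ := fun a b => by
    calc ‖a - b‖ = ‖a + -b‖ := by rw [sub_eq_add_neg]
      _ ≤ max ‖a‖ ‖-b‖ := hEult _ _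
      _ = max ‖a‖ ‖b‖ := by rw [norm_neg]
  have hx1 : ‖x‖ ≤ 1 := by
    have h1 : ‖x - v + v‖ ≤ max ‖x - v‖ ‖v‖ := hEult _ _
    rw [sub_add_cancel] at h1
    exact h1.trans (max_le (le_trans hx.le hr1) hv)
  set Δ := df x - df v with hΔdef
  have hΔ : ‖Δ‖ ≤ C * ‖x - v‖ := hf2 v x hv hx1
  have hΔsmall : ‖T₀‖ * ‖Δ‖ < 1 := by nlinarith [norm_nonneg Δ, norm_nonneg (x - v)]
  have hT₀l' : T₀.comp (df v) = 1 := by rw [hT₀l]; rfl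
  have hT₀r' : (df v).comp T₀ = 1 := by rw [hT₀r]; rfl
  obtain ⟨T, hTl, hTr⟩ := aux_inv (df x) (df v) T₀ hT₀l' hT₀r' (by rwa [← hΔdef])
  have hTnorm : ∀ S : F →L[ℚ_[p]] E, S.comp (df x) = ContinuousLinearMap.id ℚ_[p] E →
      (df x).comp S = ContinuousLinearMap.id ℚ_[p] F → ‖S‖ = ‖T₀‖ := by
    intro S hSl hSr
    have h1 : ‖S‖ ≤ ‖T₀‖ := aux_le hEult (df x) (df v) S T₀ hT₀l hSr (by rwa [← hΔdef])
    have h2 : ‖T₀‖ ≤ ‖S‖ := by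
      refine aux_le hEult (df v) (df x) T₀ S hSl hT₀r ?_
      rw [norm_sub_rev, ← hΔdef]
      nlinarith [norm_nonneg Δ]
    linarith
  refine ⟨⟨T, hTl, hTr, hTnorm T hTl hTr⟩, ?_⟩
  intro S hSl hSr
  have hSn : ‖S‖ = ‖T₀‖ := hTnorm S hSl hSr
  have hSpt : ∀ w : E, S (df x w) = w := fun w => by
    have := ContinuousLinearMap.ext_iff.1 hSl w; simpa using this
  have hSrpt : ∀ w : F, df x (S w) = w := fun w => by
    have := ContinuousLinearMap.ext_iff.1 hSr w; simpa using this
  set e : F := f x - f v - df v (x - v) with he_def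
  have he : ‖e‖ ≤ C * ‖x - v‖ ^ 2 := hf1 v x hv hx1
  have hSle : ∀ w : F, ‖S w‖ ≤ ‖T₀‖ * ‖w‖ := fun w => by
    have := S.le_opNorm w; rwa [hSn] at this
  have hkey : x - S (f x) - v = S (Δ (x - v)) - S (f v) - S e := by
    have h1 : f x = e + f v + df v (x - v) := by rw [he_def]; abel
    have h2 : S (f x) = S e + S (f v) + S (df v (x - v)) := by rw [h1, map_add, map_add]
    have h3 : S (Δ (x - v)) = (x - v) - S (df v (x - v)) := by
      rw [hΔdef, ContinuousLinearMap.sub_apply, map_sub, hSpt]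
    rw [h2, h3]; abel
  have b1 : ‖S (f v)‖ < (C * ‖T₀‖)⁻¹ := by
    refine hlt_r _ ?_
    have := hSle (f v)
    nlinarith [norm_nonneg (f v), norm_nonneg (S (f v))]
  have b3 : ‖S (Δ (x - v))‖ < (C * ‖T₀‖)⁻¹ := by
    refine hlt_r _ ?_
    have h4 : ‖S (Δ (x - v))‖ ≤ ‖T₀‖ * (‖Δ‖ * ‖x - v‖) := by
      calc ‖S (Δ (x - v))‖ ≤ ‖T₀‖ * ‖Δ (x - v)‖ := hSle _
        _ ≤ ‖T₀‖ * (‖Δ‖ * ‖x - v‖) :=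
          mul_le_mul_of_nonneg_left (Δ.le_opNorm _) hK0.le
    have s1 : ‖Δ‖ * ‖x - v‖ ≤ (C * ‖x - v‖) * ‖x - v‖ :=
      mul_le_mul_of_nonneg_right hΔ (norm_nonneg _)
    have s2 : ‖S (Δ (x - v))‖ ≤ ‖T₀‖ * ((C * ‖x - v‖) * ‖x - v‖) :=
      h4.trans (mul_le_mul_of_nonneg_left s1 hK0.le)
    calc ‖S (Δ (x - v))‖ * (C * ‖T₀‖)
        ≤ (‖T₀‖ * ((C * ‖x - v‖) * ‖x - v‖)) * (C * ‖T₀‖) :=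
          mul_le_mul_of_nonneg_right s2 hCK.le
      _ = (‖x - v‖ * (C * ‖T₀‖)) * (‖x - v‖ * (C * ‖T₀‖)) := by ring
      _ < 1 := by nlinarith [mul_nonneg (norm_nonneg (x - v)) hCK.le]
  have b4 : ‖S e‖ < (C * ‖T₀‖)⁻¹ := by
    refine hlt_r _ ?_
    have h4 := hSle e
    have s2 : ‖S e‖ ≤ ‖T₀‖ * (C * ‖x - v‖ ^ 2) :=
      h4.trans (mul_le_mul_of_nonneg_left he hK0.le)
    calc ‖S e‖ * (C * ‖T₀‖)
        ≤ (‖T₀‖ * (C * ‖x - v‖ ^ 2)) * (C * ‖T₀‖) :=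
          mul_le_mul_of_nonneg_right s2 hCK.le
      _ = (‖x - v‖ * (C * ‖T₀‖)) * (‖x - v‖ * (C * ‖T₀‖)) := by ring
      _ < 1 := by nlinarith [mul_nonneg (norm_nonneg (x - v)) hCK.le]
  have hNv : ‖x - S (f x) - v‖ < (C * ‖T₀‖)⁻¹ := by
    rw [hkey]
    calc ‖S (Δ (x - v)) - S (f v) - S e‖
        ≤ max ‖S (Δ (x - v)) - S (f v)‖ ‖S e‖ := ultra_sub _ _
      _ ≤ max (max ‖S (Δ (x - v))‖ ‖S (f v)‖) ‖S e‖ := max_le_max (ultra_sub _ _) le_rfl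
      _ < _ := max_lt (max_lt b3 b1) b4
  refine ⟨hNv, ?_⟩
  have hN1 : ‖x - S (f x)‖ ≤ 1 := by
    have h1 : ‖x - S (f x) - v + v‖ ≤ max ‖x - S (f x) - v‖ ‖v‖ := hEult _ _
    rw [sub_add_cancel] at h1
    exact h1.trans (max_le (le_trans hNv.le hr1) hv)
  have hb := hf1 x (x - S (f x)) hx1 hN1
  have h5 : x - S (f x) - x = -(S (f x)) := by abel
  have heq : f (x - S (f x)) - f x - df x (x - S (f x) - x) = f (x - S (f x)) := by
    rw [h5, map_neg, hSrpt]; abel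
  rw [heq] at hb
  have h6 : ‖x - S (f x) - x‖ = ‖S (f x)‖ := by rw [h5, norm_neg]
  rw [h6] at hb
  have h7 : ‖S (f x)‖ ≤ ‖T₀‖ * ‖f x‖ := hSle (f x)
  calc ‖f (x - S (f x))‖ ≤ C * ‖S (f x)‖ ^ 2 := hb
    _ ≤ C * (‖T₀‖ * ‖f x‖) ^ 2 :=
        mul_le_mul_of_nonneg_left (pow_le_pow_left₀ (norm_nonneg _) h7 2) hC.le
    _ = C * ‖T₀‖ ^ 2 * ‖f x‖ ^ 2 := by ring
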